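/- Let μ, b, λ: [0,∞) → ℝ be nonnegative functions with b nondecreasing, b(0) = 1, b(a+α) ≤ (B₀α+1)b(a) for a > 0, α ∈ (0,1), and μ(a)b(a) ≤ β₀λ(a) for all a ≥ 0 with β₀ > 1, B₀ > 0. Fix α ∈ (0,1) and define μ_i, b_i, λ_i as the averages of μ, b, λ over ((i−1)α, iα]. Then μ_i·b_i ≤ β₀(B₀+1)·λ_i for all i ≥ 1. -/

import Mathlib

open MeasureTheory

/-- The average of `f` over the interval `((i-1)α, iα]`. -/
noncomputable def avg (f : ℝ → ℝ) (α : ℝ) (i : ℕ) : ℝ :=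
  (1 / α) * ∫ a in (((i : ℝ) - 1) * α)..((i : ℝ) * α), f a

theorem stmt_5 (μ b lam : ℝ → ℝ) (β₀ B₀ α : ℝ)
    (hβ₀ : 1 < β₀) (hB₀ : 0 < B₀) (hα : α ∈ Set.Ioo (0 : ℝ) 1)
    (hμnn : ∀ a : ℝ, 0 ≤ a → 0 ≤ μ a) (hbnn : ∀ a : ℝ, 0 ≤ a → 0 ≤ b a)
    (hlamnn : ∀ a : ℝ, 0 ≤ a → 0 ≤ lam a)
    (hmono : MonotoneOn b (Set.Ici (0 : ℝ))) (hb0 : b 0 = 1)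
    (hgrowth : ∀ a : ℝ, 0 < a → ∀ β ∈ Set.Ioo (0 : ℝ) 1, b (a + β) ≤ (B₀ * β + 1) * b a)
    (hμb : ∀ a : ℝ, 0 ≤ a → μ a * b a ≤ β₀ * lam a)
    (hμint : ∀ i : ℕ, IntervalIntegrable μ volume (((i : ℝ) - 1) * α) ((i : ℝ) * α))
    (hlamint : ∀ i : ℕ, IntervalIntegrable lam volume (((i : ℝ) - 1) * α) ((i : ℝ) * α)) :
    ∀ i : ℕ, 1 ≤ i → avg μ α i * avg b α i ≤ β₀ * (B₀ + 1) * avg lam α i := by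
  obtain ⟨hα0, hα1⟩ := hα
  intro i hi
  set L : ℝ := ((i : ℝ) - 1) * α with hLdef
  set R : ℝ := (i : ℝ) * α with hRdef
  have hi1 : (1 : ℝ) ≤ (i : ℝ) := by exact_mod_cast hi
  have hL0 : 0 ≤ L := mul_nonneg (by linarith) hα0.le
  have hRL : R - L = α := by ring
  have hLR : L < R := by linarith
  have hR0 : 0 ≤ R := le_trans hL0 hLR.le
  -- subset facts
  have hsub : Set.Ioc L R ⊆ Set.Ici (0 : ℝ) := fun x hx => le_trans hL0 hx.1.le
  have hbR1 : (1 : ℝ) ≤ b R := by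
    have := hmono (Set.mem_Ici.2 le_rfl) (Set.mem_Ici.2 hR0) hR0
    rwa [hb0] at this
  have hbRpos : 0 < b R := lt_of_lt_of_le one_pos hbR1
  -- key pointwise bound
  have hkey : ∀ a ∈ Set.Ioc L R, b R ≤ (B₀ * α + 1) * b a := by
    intro a ha
    have ha0 : 0 < a := lt_of_le_of_lt hL0 ha.1
    have hba : (1 : ℝ) ≤ b a := by
      have := hmono (Set.mem_Ici.2 le_rfl) (Set.mem_Ici.2 ha0.le) ha0.le
      rwa [hb0] at this
    rcases eq_or_lt_of_le ha.2 with h | h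
    · rw [h]
      nlinarith [mul_pos hB₀ hα0]
    · have hβmem : R - a ∈ Set.Ioo (0 : ℝ) 1 := by
        constructor
        · linarith
        · have : R - a < α := by
            have := ha.1
            linarith
          linarith
      have := hgrowth a ha0 (R - a) hβmem
      have h2 : b (a + (R - a)) = b R := by ring_nf
      rw [h2] at this
      have hRa : R - a ≤ α := by linarith [ha.1]
      have hmul : B₀ * (R - a) * b a ≤ B₀ * α * b a :=
        mul_le_mul_of_nonneg_right (mul_le_mul_of_nonneg_left hRa hB₀.le) (hbnn a ha0.le)
      nlinarith
  -- pointwise bound for μ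
  have hμbound : ∀ a ∈ Set.Ioc L R, μ a ≤ β₀ * (B₀ * α + 1) / b R * lam a := by
    intro a ha
    have ha0 : 0 < a := lt_of_le_of_lt hL0 ha.1
    have hba : (1 : ℝ) ≤ b a := by
      have := hmono (Set.mem_Ici.2 le_rfl) (Set.mem_Ici.2 ha0.le) ha0.le
      rwa [hb0] at this
    have h1 := hμb a ha0.le
    have h2 := hkey a ha
    have hμa := hμnn a ha0.le
    rw [div_mul_eq_mul_div, le_div_iff₀ hbRpos]
    calc μ a * b R ≤ μ a * ((B₀ * α + 1) * b a) := by
          exact mul_le_mul_of_nonneg_left h2 hμa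
      _ = (B₀ * α + 1) * (μ a * b a) := by ring
      _ ≤ (B₀ * α + 1) * (β₀ * lam a) := by
          apply mul_le_mul_of_nonneg_left h1
          nlinarith
      _ = β₀ * (B₀ * α + 1) * lam a := by ring
  -- integrability
  have hbint : IntervalIntegrable b volume L R := by
    apply MonotoneOn.intervalIntegrable
    apply hmono.mono
    rw [Set.uIcc_of_le hLR.le]
    exact fun x hx => le_trans hL0 hx.1
  have hμint' : IntegrableOn μ (Set.Ioc L R) volume := (hμint i).1
  have hlamint' : IntegrableOn lam (Set.Ioc L R) volume := (hlamint i).1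
  have hbint' : IntegrableOn b (Set.Ioc L R) volume := hbint.1
  -- integral bounds
  have hIμ : (∫ a in L..R, μ a) ≤ β₀ * (B₀ * α + 1) / b R * ∫ a in L..R, lam a := by
    rw [intervalIntegral.integral_of_le hLR.le, intervalIntegral.integral_of_le hLR.le,
      ← integral_const_mul]
    apply setIntegral_mono_on hμint' (hlamint'.const_mul _) measurableSet_Ioc
    exact hμbound
  have hIb : (∫ a in L..R, b a) ≤ b R * α := by
    have : (∫ a in L..R, b a) ≤ ∫ _ in L..R, b R := by
      rw [intervalIntegral.integral_of_le hLR.le, intervalIntegral.integral_of_le hLR.le]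
      apply setIntegral_mono_on hbint' (integrableOn_const (by simp) (by simp))
        measurableSet_Ioc
      intro a ha
      exact hmono (hsub ha) (Set.mem_Ici.2 hR0) ha.2
    rw [intervalIntegral.integral_const, smul_eq_mul, hRL] at this
    linarith [this]
  have hIμnn : 0 ≤ ∫ a in L..R, μ a := by
    rw [intervalIntegral.integral_of_le hLR.le]
    apply setIntegral_nonneg measurableSet_Ioc
    exact fun a ha => hμnn a (hsub ha)
  have hIlnn : 0 ≤ ∫ a in L..R, lam a := by
    rw [intervalIntegral.integral_of_le hLR.le]
    apply setIntegral_nonneg measurableSet_Ioc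
    exact fun a ha => hlamnn a (hsub ha)
  have hIbnn : 0 ≤ ∫ a in L..R, b a := by
    rw [intervalIntegral.integral_of_le hLR.le]
    apply setIntegral_nonneg measurableSet_Ioc
    exact fun a ha => hbnn a (hsub ha)
  -- conclude
  show (1 / α * ∫ a in L..R, μ a) * (1 / α * ∫ a in L..R, b a) ≤
    β₀ * (B₀ + 1) * (1 / α * ∫ a in L..R, lam a)
  set Iμ := ∫ a in L..R, μ a
  set Ib := ∫ a in L..R, b a
  set Il := ∫ a in L..R, lam a
  have step1 : Iμ * Ib ≤ Iμ * (b R * α) := mul_le_mul_of_nonneg_left hIb hIμnn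
  have step2 : Iμ * (b R * α) ≤ (β₀ * (B₀ * α + 1) / b R * Il) * (b R * α) :=
    mul_le_mul_of_nonneg_right hIμ (by positivity)
  have step3 : (β₀ * (B₀ * α + 1) / b R * Il) * (b R * α) = β₀ * (B₀ * α + 1) * α * Il := by
    field_simp
  have step4 : β₀ * (B₀ * α + 1) * α * Il ≤ β₀ * (B₀ + 1) * α * Il := by
    apply mul_le_mul_of_nonneg_right _ hIlnn
    nlinarith [mul_nonneg (mul_nonneg (mul_pos (by linarith : (0:ℝ) < β₀) hB₀).le hα0.le)
      (by linarith : (0:ℝ) ≤ 1 - α)]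
  have hfinal : Iμ * Ib ≤ β₀ * (B₀ + 1) * α * Il := by
    calc Iμ * Ib ≤ Iμ * (b R * α) := step1
      _ ≤ (β₀ * (B₀ * α + 1) / b R * Il) * (b R * α) := step2
      _ = β₀ * (B₀ * α + 1) * α * Il := step3
      _ ≤ β₀ * (B₀ + 1) * α * Il := step4
  have hα2 : (0:ℝ) < α * α := mul_pos hα0 hα0
  have e1 : (1 / α * Iμ) * (1 / α * Ib) = Iμ * Ib / (α * α) := by
    field_simp
  have e2 : β₀ * (B₀ + 1) * (1 / α * Il) = β₀ * (B₀ + 1) * α * Il / (α * α) := by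
    field_simp
  rw [e1, e2, div_le_div_iff₀ hα2 hα2]
  nlinarith [mul_le_mul_of_nonneg_right hfinal hα2.le]
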